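/- Let Σ ∈ ℝ^{d×d} be a symmetric positive definite matrix, β ∈ ℝ^d, j ∈ {1,…,d}, and u ⊆ {1,…,d}\{j}. Write −u for the complement of u and v = −u \ {j}. For any w ⊆ {1,…,d}, write S(w) = Σ_{−w,−w} − Σ_{−w,w} Σ_{w,w}^{-1} Σ_{w,−w} for the Schur complement (conditional covariance of x_{−w} given x_w). Then β_{−u}ᵀ S(u) β_{−u} − β_vᵀ S(u∪{j}) β_v = (c β_{−u})² / D, where c = Σ_{j,−u} − Σ_{j,u} Σ_{u,u}^{-1} Σ_{u,−u} is the row vector of conditional covariances of x_j with x_{−u} given x_u and D = Σ_{jj} − Σ_{j,u} Σ_{u,u}^{-1} Σ_{u,j} > 0 is the conditional variance of x_j given x_u. -/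

import Mathlib

open Finset Matrix

/-- The submatrix of `A` with rows indexed by `s` and columns indexed by `t`. -/
def subm {d : ℕ} (A : Matrix (Fin d) (Fin d) ℝ) (s t : Finset (Fin d)) :
    Matrix s t ℝ :=
  A.submatrix (fun i => (i : Fin d)) (fun k => (k : Fin d))

/-- The Schur complement `Σ_{-w,-w} - Σ_{-w,w} Σ_{w,w}⁻¹ Σ_{w,-w}`, i.e. the conditional
covariance matrix of `x_{-w}` given `x_w` for a Gaussian vector with covariance `A`. -/
noncomputable def schurCompl {d : ℕ} (A : Matrix (Fin d) (Fin d) ℝ)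
    (w : Finset (Fin d)) : Matrix (wᶜ : Finset (Fin d)) (wᶜ : Finset (Fin d)) ℝ :=
  subm A wᶜ wᶜ - subm A wᶜ w * (subm A w w)⁻¹ * subm A w wᶜ

/-- The row vector of conditional covariances of `x_j` with `x_{-u}` given `x_u`:
`Σ_{j,-u} - Σ_{j,u} Σ_{u,u}⁻¹ Σ_{u,-u}`. -/
noncomputable def condCovRow {d : ℕ} (A : Matrix (Fin d) (Fin d) ℝ)
    (u : Finset (Fin d)) (j : Fin d) : (uᶜ : Finset (Fin d)) → ℝ :=
  fun k => A j k - ∑ a : u, ∑ b : u, A j a * (subm A u u)⁻¹ a b * A b k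

/-- The conditional variance of `x_j` given `x_u`: `Σ_{jj} - Σ_{j,u} Σ_{u,u}⁻¹ Σ_{u,j}`. -/
noncomputable def condVarGauss {d : ℕ} (A : Matrix (Fin d) (Fin d) ℝ)
    (u : Finset (Fin d)) (j : Fin d) : ℝ :=
  A j j - ∑ a : u, ∑ b : u, A j a * (subm A u u)⁻¹ a b * A b j

/-- The restriction of the coefficient vector `β` to the index set `s`. -/
def restr {d : ℕ} (β : Fin d → ℝ) (s : Finset (Fin d)) : s → ℝ := fun i => β i

/-! ### Auxiliary definitions and lemmas -/

section Aux

variable {d : ℕ}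

/-- The vector `Σ_{w,-w} γ_{-w}` as a function on `w`. -/
noncomputable def gv (A : Matrix (Fin d) (Fin d) ℝ) (γ : Fin d → ℝ) (w : Finset (Fin d)) :
    w → ℝ := fun a => ∑ k ∈ wᶜ, A a k * γ k

/-- The vector equal to `γ` off `w` and to `-(Σ_{ww}⁻¹ Σ_{w,-w} γ_{-w})` on `w`. -/
noncomputable def ycomp (A : Matrix (Fin d) (Fin d) ℝ) (γ : Fin d → ℝ) (w : Finset (Fin d)) :
    Fin d → ℝ :=
  fun i => if h : i ∈ w then -(((subm A w w)⁻¹ *ᵥ gv A γ w) ⟨i, h⟩) else γ i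

lemma ycomp_mem (A : Matrix (Fin d) (Fin d) ℝ) (γ : Fin d → ℝ) (w : Finset (Fin d)) (k : w) :
    ycomp A γ w ↑k = -(((subm A w w)⁻¹ *ᵥ gv A γ w) k) := dif_pos k.2

lemma ycomp_not_mem (A : Matrix (Fin d) (Fin d) ℝ) (γ : Fin d → ℝ) {w : Finset (Fin d)}
    {i : Fin d} (hi : i ∉ w) : ycomp A γ w i = γ i := dif_neg hi

lemma sum_w_mul_ycomp (A : Matrix (Fin d) (Fin d) ℝ) (γ : Fin d → ℝ) (w : Finset (Fin d))
    (i : Fin d) :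
    ∑ k ∈ w, A i k * ycomp A γ w k
      = -∑ a : w, A i a * ((subm A w w)⁻¹ *ᵥ gv A γ w) a := by
  rw [← Finset.sum_coe_sort w (fun k => A i k * ycomp A γ w k)]
  simp [ycomp_mem, mul_neg]

lemma mulVec_ycomp_apply (A : Matrix (Fin d) (Fin d) ℝ) (γ : Fin d → ℝ) (w : Finset (Fin d))
    (i : Fin d) :
    (A *ᵥ ycomp A γ w) i
      = (∑ k ∈ wᶜ, A i k * γ k) - ∑ a : w, A i a * ((subm A w w)⁻¹ *ᵥ gv A γ w) a := by
  have h0 : (A *ᵥ ycomp A γ w) i = ∑ k, A i k * ycomp A γ w k := rfl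
  rw [h0, ← Finset.sum_add_sum_compl w, sum_w_mul_ycomp]
  have h2 : ∑ k ∈ wᶜ, A i k * ycomp A γ w k = ∑ k ∈ wᶜ, A i k * γ k :=
    Finset.sum_congr rfl fun k hk => by rw [ycomp_not_mem _ _ (Finset.mem_compl.mp hk)]
  rw [h2]; ring

/-- Extension by zero of a vector on `s` to a vector on `Fin d`. -/
def ext0 (s : Finset (Fin d)) (x : s → ℝ) : Fin d → ℝ :=
  fun i => if h : i ∈ s then x ⟨i, h⟩ else 0

lemma ext0_mem (s : Finset (Fin d)) (x : s → ℝ) (k : s) : ext0 s x ↑k = x k := dif_pos k.2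

lemma subm_posDef {A : Matrix (Fin d) (Fin d) ℝ} (hA : A.PosDef) (s : Finset (Fin d)) :
    (subm A s s).PosDef := by
  refine posDef_iff_dotProduct_mulVec.mpr ⟨?_, ?_⟩
  · exact hA.1.submatrix _
  · intro x hx
    have hx' : ext0 s x ≠ 0 := by
      intro h
      apply hx
      funext k
      have := congrFun h ↑k
      rwa [ext0_mem] at this
    have key : (star x) ⬝ᵥ (subm A s s *ᵥ x) = star (ext0 s x) ⬝ᵥ (A *ᵥ ext0 s x) := by
      simp only [star_trivial]
      have hmv : ∀ i : Fin d, (A *ᵥ ext0 s x) i = ∑ k : s, A i k * x k := by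
        intro i
        show ∑ k, A i k * ext0 s x k = _
        rw [← Finset.sum_add_sum_compl s, ← Finset.sum_coe_sort s (fun k => A i k * ext0 s x k)]
        have h2 : ∑ k ∈ sᶜ, A i k * ext0 s x k = 0 := by
          refine Finset.sum_eq_zero fun k hk => ?_
          rw [ext0, dif_neg (Finset.mem_compl.mp hk), mul_zero]
        rw [h2, add_zero]
        exact Finset.sum_congr rfl fun k _ => by rw [ext0_mem]
      show ∑ a : s, x a * (subm A s s *ᵥ x) a = ∑ i, ext0 s x i * (A *ᵥ ext0 s x) i
      rw [← Finset.sum_add_sum_compl s,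
        ← Finset.sum_coe_sort s (fun i => ext0 s x i * (A *ᵥ ext0 s x) i)]
      have h2 : ∑ i ∈ sᶜ, ext0 s x i * (A *ᵥ ext0 s x) i = 0 := by
        refine Finset.sum_eq_zero fun k hk => ?_
        rw [ext0, dif_neg (Finset.mem_compl.mp hk), zero_mul]
      rw [h2, add_zero]
      refine Finset.sum_congr rfl fun a _ => ?_
      rw [ext0_mem, hmv]
      rfl
    rw [key]
    exact hA.dotProduct_mulVec_pos hx'

lemma subm_mulVec_restr (A : Matrix (Fin d) (Fin d) ℝ) (γ : Fin d → ℝ) (w : Finset (Fin d)) :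
    subm A w wᶜ *ᵥ restr γ wᶜ = gv A γ w := by
  funext a
  show ∑ k : (wᶜ : Finset (Fin d)), A a k * γ k = ∑ k ∈ wᶜ, A a k * γ k
  exact Finset.sum_coe_sort wᶜ (fun k => A (↑a) k * γ k)

lemma mulVec_ycomp_mem {A : Matrix (Fin d) (Fin d) ℝ} (γ : Fin d → ℝ) {w : Finset (Fin d)}
    (hw : IsUnit (subm A w w)) {i : Fin d} (hi : i ∈ w) :
    (A *ᵥ ycomp A γ w) i = 0 := by
  rw [mulVec_ycomp_apply]
  have h1 : ∑ a : w, A i a * ((subm A w w)⁻¹ *ᵥ gv A γ w) a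
      = (subm A w w *ᵥ ((subm A w w)⁻¹ *ᵥ gv A γ w)) ⟨i, hi⟩ := rfl
  rw [h1, mulVec_mulVec, Matrix.mul_nonsing_inv _ ((Matrix.isUnit_iff_isUnit_det _).mp hw),
    one_mulVec]
  show (∑ k ∈ wᶜ, A i k * γ k) - gv A γ w ⟨i, hi⟩ = 0
  rw [gv, sub_self]

lemma schur_mulVec (A : Matrix (Fin d) (Fin d) ℝ) (γ : Fin d → ℝ) (w : Finset (Fin d))
    (i : (wᶜ : Finset (Fin d))) :
    (schurCompl A w *ᵥ restr γ wᶜ) i = (A *ᵥ ycomp A γ w) ↑i := by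
  rw [mulVec_ycomp_apply, schurCompl, sub_mulVec, Matrix.mul_assoc, ← mulVec_mulVec,
    ← mulVec_mulVec, subm_mulVec_restr]
  show (subm A wᶜ wᶜ *ᵥ restr γ wᶜ) i - ∑ a : w, A i a * ((subm A w w)⁻¹ *ᵥ gv A γ w) a = _
  congr 1
  show ∑ k : (wᶜ : Finset (Fin d)), A i k * γ k = ∑ k ∈ wᶜ, A i k * γ k
  exact Finset.sum_coe_sort wᶜ (fun k => A (↑i) k * γ k)

lemma quad_eq (A : Matrix (Fin d) (Fin d) ℝ) (β : Fin d → ℝ) (w : Finset (Fin d))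
    (hw : IsUnit (subm A w w)) :
    restr β wᶜ ⬝ᵥ (schurCompl A w *ᵥ restr β wᶜ) = ycomp A β w ⬝ᵥ (A *ᵥ ycomp A β w) := by
  show ∑ i : (wᶜ : Finset (Fin d)), restr β wᶜ i * (schurCompl A w *ᵥ restr β wᶜ) i
    = ∑ i, ycomp A β w i * (A *ᵥ ycomp A β w) i
  rw [← Finset.sum_add_sum_compl w (fun i => ycomp A β w i * (A *ᵥ ycomp A β w) i)]
  have h1 : ∑ i ∈ w, ycomp A β w i * (A *ᵥ ycomp A β w) i = 0 :=
    Finset.sum_eq_zero fun i hi => by rw [mulVec_ycomp_mem β hw hi, mul_zero]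
  rw [h1, zero_add,
    ← Finset.sum_coe_sort wᶜ (fun i => ycomp A β w i * (A *ᵥ ycomp A β w) i)]
  refine Finset.sum_congr rfl fun i _ => ?_
  rw [schur_mulVec, ycomp_not_mem A β (Finset.mem_compl.mp i.2)]
  rfl

lemma covrow_eq (A : Matrix (Fin d) (Fin d) ℝ) (β : Fin d → ℝ) (u : Finset (Fin d))
    (j : Fin d) :
    condCovRow A u j ⬝ᵥ restr β uᶜ = (A *ᵥ ycomp A β u) j := by
  rw [mulVec_ycomp_apply]
  show ∑ k : (uᶜ : Finset (Fin d)),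
      (A j k - ∑ a : u, ∑ b : u, A j a * (subm A u u)⁻¹ a b * A b k) * β k = _
  simp only [sub_mul, Finset.sum_sub_distrib]
  congr 1
  · exact Finset.sum_coe_sort uᶜ (fun k => A j k * β k)
  · have hmv : ∀ a : u, ((subm A u u)⁻¹ *ᵥ gv A β u) a
        = ∑ b : u, (subm A u u)⁻¹ a b * ∑ k : (uᶜ : Finset (Fin d)), A b k * β k := by
      intro a
      show ∑ b : u, (subm A u u)⁻¹ a b * gv A β u b = _
      refine Finset.sum_congr rfl fun b _ => ?_
      rw [gv, ← Finset.sum_coe_sort uᶜ (fun k => A b k * β k)]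
    simp only [hmv, Finset.mul_sum, Finset.sum_mul]
    rw [Finset.sum_comm]
    refine Finset.sum_congr rfl fun a _ => ?_
    rw [Finset.sum_comm]
    refine Finset.sum_congr rfl fun b _ => Finset.sum_congr rfl fun k _ => by ring

lemma sum_single_compl {u : Finset (Fin d)} {j : Fin d} (hj : j ∉ u) (f : Fin d → ℝ) :
    ∑ k ∈ uᶜ, f k * (Pi.single j 1 : Fin d → ℝ) k = f j := by
  rw [Finset.sum_eq_single_of_mem j (Finset.mem_compl.mpr hj)]
  · rw [Pi.single_eq_same, mul_one]
  · intro k _ hk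
    rw [Pi.single_eq_of_ne hk, mul_zero]

lemma condVar_eq (A : Matrix (Fin d) (Fin d) ℝ) {u : Finset (Fin d)} {j : Fin d} (hj : j ∉ u) :
    condVarGauss A u j = (A *ᵥ ycomp A (Pi.single j 1) u) j := by
  rw [mulVec_ycomp_apply, condVarGauss]
  congr 1
  · exact (sum_single_compl hj _).symm
  · have hgv : gv A (Pi.single j 1) u = fun b : u => A b j := by
      funext b; exact sum_single_compl hj _
    rw [hgv]
    refine Finset.sum_congr rfl fun a _ => ?_
    show _ = A j a * ∑ b : u, (subm A u u)⁻¹ a b * A b j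
    rw [Finset.mul_sum]
    exact Finset.sum_congr rfl fun b _ => by ring

lemma dot_mulVec_symm {A : Matrix (Fin d) (Fin d) ℝ} (hs : ∀ i k, A i k = A k i)
    (x y : Fin d → ℝ) : x ⬝ᵥ (A *ᵥ y) = y ⬝ᵥ (A *ᵥ x) := by
  simp only [dotProduct, mulVec, Finset.mul_sum]
  rw [Finset.sum_comm]
  exact Finset.sum_congr rfl fun i _ => Finset.sum_congr rfl fun k _ => by
    rw [hs k i]; ring

lemma ycomp_unique {A : Matrix (Fin d) (Fin d) ℝ} (hA : A.PosDef) (γ : Fin d → ℝ)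
    (w : Finset (Fin d)) (x : Fin d → ℝ) (hoff : ∀ i ∉ w, x i = γ i)
    (hzero : ∀ i ∈ w, (A *ᵥ x) i = 0) : x = ycomp A γ w := by
  have hw : IsUnit (subm A w w) := (subm_posDef hA w).isUnit
  set e := x - ycomp A γ w with he
  have he_off : ∀ i ∉ w, e i = 0 := fun i hi => by
    simp [he, hoff i hi, ycomp_not_mem A γ hi]
  have hAe : ∀ i ∈ w, (A *ᵥ e) i = 0 := fun i hi => by
    rw [he, mulVec_sub]
    simp [hzero i hi, mulVec_ycomp_mem γ hw hi]
  have hquad : e ⬝ᵥ (A *ᵥ e) = 0 := by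
    show ∑ i, e i * (A *ᵥ e) i = 0
    rw [← Finset.sum_add_sum_compl w,
      Finset.sum_eq_zero (fun i hi => by rw [hAe i hi, mul_zero]),
      Finset.sum_eq_zero (fun i hi => by rw [he_off i (Finset.mem_compl.mp hi), zero_mul]),
      add_zero]
  have he0 : e = 0 := by
    by_contra hne
    have hpos := hA.dotProduct_mulVec_pos hne
    rw [star_trivial, hquad] at hpos
    exact lt_irrefl 0 hpos
  have := sub_eq_zero.mp (he ▸ he0)
  exact this

end Aux

/-- Key identity for Shapley effects of a linear function of a Gaussian vector:
the decrease in conditional variance of `βᵀx` when `x_j` is added to the conditioning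
set `u` equals `Cov(x_j, x_{-u}ᵀβ_{-u} ∣ x_u)² / Var(x_j ∣ x_u)`, and that conditional
variance is positive. -/
theorem gaussian_linear_variance_reduction {d : ℕ} (A : Matrix (Fin d) (Fin d) ℝ)
    (hA : A.PosDef) (β : Fin d → ℝ) (j : Fin d) (u : Finset (Fin d)) (hj : j ∉ u) :
    0 < condVarGauss A u j ∧
      restr β uᶜ ⬝ᵥ (schurCompl A u).mulVec (restr β uᶜ)
          - restr β (insert j u)ᶜ ⬝ᵥ
            (schurCompl A (insert j u)).mulVec (restr β (insert j u)ᶜ)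
        = (condCovRow A u j ⬝ᵥ restr β uᶜ) ^ 2 / condVarGauss A u j := by
  have hu : IsUnit (subm A u u) := (subm_posDef hA u).isUnit
  have hw2 : IsUnit (subm A (insert j u) (insert j u)) := (subm_posDef hA (insert j u)).isUnit
  set y1 := ycomp A β u with hy1
  set z := ycomp A (Pi.single j 1) u with hz
  set c := (A *ᵥ y1) j with hc
  set D := (A *ᵥ z) j with hDdef
  have hdotz : ∀ v : Fin d → ℝ, (∀ i ∈ u, v i = 0) → z ⬝ᵥ v = v j := by
    intro v hv
    show ∑ i, z i * v i = v j
    rw [← Finset.sum_add_sum_compl u,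
      Finset.sum_eq_zero (fun i hi => by rw [hv i hi, mul_zero]), zero_add]
    rw [show ∑ i ∈ uᶜ, z i * v i = ∑ i ∈ uᶜ, v i * (Pi.single j 1 : Fin d → ℝ) i from
      Finset.sum_congr rfl fun i hi => by
        rw [hz, ycomp_not_mem _ _ (Finset.mem_compl.mp hi)]; ring]
    exact sum_single_compl hj v
  have hAz0 : ∀ i ∈ u, (A *ᵥ z) i = 0 := fun i hi => mulVec_ycomp_mem _ hu hi
  have hAy10 : ∀ i ∈ u, (A *ᵥ y1) i = 0 := fun i hi => mulVec_ycomp_mem _ hu hi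
  have hD : condVarGauss A u j = D := condVar_eq A hj
  have hzne : z ≠ 0 := by
    intro h
    have h1 : z j = 1 := by rw [hz, ycomp_not_mem _ _ hj, Pi.single_eq_same]
    rw [h] at h1
    exact one_ne_zero h1.symm
  have hDpos : 0 < D := by
    have hpos := hA.dotProduct_mulVec_pos hzne
    rw [star_trivial, hdotz _ hAz0] at hpos
    exact hpos
  have hDne : D ≠ 0 := ne_of_gt hDpos
  set x : Fin d → ℝ := y1 - (c / D) • z with hx
  have hxy2 : ycomp A β (insert j u) = x := by
    symm
    refine ycomp_unique hA β (insert j u) x ?_ ?_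
    · intro i hi
      have hiu : i ∉ u := fun h => hi (Finset.mem_insert_of_mem h)
      have hij : i ≠ j := fun h => hi (h ▸ Finset.mem_insert_self j u)
      show y1 i - (c / D) * z i = β i
      rw [hy1, hz, ycomp_not_mem A β hiu, ycomp_not_mem _ _ hiu, Pi.single_eq_of_ne hij,
        mul_zero, sub_zero]
    · intro i hi
      have hmv : (A *ᵥ x) i = (A *ᵥ y1) i - (c / D) * (A *ᵥ z) i := by
        rw [hx, mulVec_sub, mulVec_smul]
        simp
      rcases Finset.mem_insert.mp hi with h | h
      · subst h
        rw [hmv, ← hc, ← hDdef, div_mul_cancel₀ c hDne, sub_self]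
      · rw [hmv, hAy10 i h, hAz0 i h, mul_zero, sub_zero]
  have hsymm : ∀ i k, A i k = A k i := by
    intro i k
    conv_lhs => rw [← hA.1]
    simp [conjTranspose_apply]
  have hQ1 : restr β uᶜ ⬝ᵥ (schurCompl A u *ᵥ restr β uᶜ) = y1 ⬝ᵥ (A *ᵥ y1) :=
    quad_eq A β u hu
  have hQ2 : restr β (insert j u)ᶜ ⬝ᵥ (schurCompl A (insert j u) *ᵥ restr β (insert j u)ᶜ)
      = x ⬝ᵥ (A *ᵥ x) := by
    rw [quad_eq A β (insert j u) hw2, hxy2]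
  have hzAy1 : z ⬝ᵥ (A *ᵥ y1) = c := hdotz _ hAy10
  have hy1Az : y1 ⬝ᵥ (A *ᵥ z) = c := by rw [dot_mulVec_symm hsymm]; exact hzAy1
  have hzAz : z ⬝ᵥ (A *ᵥ z) = D := hdotz _ hAz0
  have hxAx : x ⬝ᵥ (A *ᵥ x) = y1 ⬝ᵥ (A *ᵥ y1) - c ^ 2 / D := by
    rw [hx]
    simp only [mulVec_sub, mulVec_smul, sub_dotProduct, dotProduct_sub, smul_dotProduct,
      dotProduct_smul, smul_eq_mul]
    rw [hzAy1, hy1Az, hzAz]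
    field_simp
    ring
  have hcov : condCovRow A u j ⬝ᵥ restr β uᶜ = c := covrow_eq A β u j
  refine ⟨hD ▸ hDpos, ?_⟩
  rw [hQ1, hQ2, hxAx, hcov, hD]
  ring
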